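/- For all reals 0 < a < b, log(b/a) + a/b − 1 ≥ (b − a)² / (2b²). -/

import Mathlib

open Real

lemma pinsker_exponential_aux (t : ℝ) (ht : 0 < t) (ht1 : t < 1) :
    Real.log t + (1 - t) + (1 - t) ^ 2 / 2 ≤ 0 := by
  set f : ℝ → ℝ := fun x => Real.log x + (1 - x) + (1 - x) ^ 2 / 2 with hf
  have hder : ∀ x ∈ Set.Ioo t 1, HasDerivAt f ((x - 1) ^ 2 / x) x := by
    intro x hx
    have hx0 : 0 < x := lt_trans ht hx.1
    have h := ((Real.hasDerivAt_log hx0.ne').add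
        ((hasDerivAt_const x 1).sub (hasDerivAt_id x))).add
        ((((hasDerivAt_const x 1).sub (hasDerivAt_id x)).pow 2).div_const 2)
    have h' : HasDerivAt f _ x := h
    convert h' using 1
    simp only [Pi.sub_apply, id]
    field_simp
    ring
  have hmono : MonotoneOn f (Set.Icc t 1) := by
    apply monotoneOn_of_deriv_nonneg (convex_Icc t 1)
    · apply ContinuousOn.add
      · apply ContinuousOn.add
        · apply Real.continuousOn_log.mono
          intro x hx
          exact ne_of_gt (lt_of_lt_of_le ht hx.1)
        · fun_prop
      · fun_prop
    · intro x hx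
      rw [interior_Icc] at hx
      exact ((hder x hx).differentiableAt).differentiableWithinAt
    · intro x hx
      rw [interior_Icc] at hx
      rw [(hder x hx).deriv]
      have hx0 : 0 < x := lt_trans ht hx.1
      positivity
  have h := hmono (Set.left_mem_Icc.2 ht1.le) (Set.right_mem_Icc.2 ht1.le) ht1.le
  simpa [hf, Real.log_one] using h

theorem pinsker_exponential (a b : ℝ) (ha : 0 < a) (hab : a < b) :
    Real.log (b / a) + a / b - 1 ≥ (b - a) ^ 2 / (2 * b ^ 2) := by
  have hb : 0 < b := lt_trans ha hab
  set t := a / b with htdef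
  have ht : 0 < t := div_pos ha hb
  have ht1 : t < 1 := (div_lt_one hb).2 hab
  have hlog : Real.log (b / a) = -Real.log t := by
    rw [htdef, ← Real.log_inv, inv_div]
  have key := pinsker_exponential_aux t ht ht1
  have hba : b - a = b * (1 - t) := by
    rw [htdef, mul_sub, mul_one, mul_div_assoc', mul_div_cancel_left₀ a hb.ne']
  have hrhs : (b - a) ^ 2 / (2 * b ^ 2) = (1 - t) ^ 2 / 2 := by
    rw [hba]
    field_simp
  rw [hlog, hrhs]
  linarith
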